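/- Let G be a minimal counterexample (fewest vertices) to the statement 'every graph with mad < 5/2, girth ≥ 10, and Δ = 4 satisfies χ²ₗ ≤ 6'. Then G contains no three consecutive vertices of degree 2, i.e., no path u-v-w where u, v, w all have degree 2 in G. -/

import Mathlib

open scoped Classical

/-- A minimal (fewest vertices) counterexample `G` to "every graph with `mad < 5/2`,
girth at least 10, and `Δ = 4` satisfies `χ²ₗ ≤ 6`" contains no three consecutive
vertices of degree 2: there is no path `u - v - w` with `d(u) = d(v) = d(w) = 2`. -/
theorem minimal_counterexample_no_three_consecutive_degree_two
    {V : Type} [Fintype V] (G : SimpleGraph V)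
    (hΔ : G.maxDegree = 4)
    (hmad : ∀ s : Finset V, s.Nonempty →
      2 * ((s ×ˢ s).filter fun p => G.Adj p.1 p.2).card < 5 * s.card)
    (hgirth : 10 ≤ G.egirth)
    (hbad : ∃ L : V → Finset ℕ, (∀ v, 6 ≤ (L v).card) ∧
      ¬ ∃ φ : V → ℕ, (∀ v, φ v ∈ L v) ∧
        ∀ u v, u ≠ v → (G.Adj u v ∨ ∃ w, G.Adj u w ∧ G.Adj w v) → φ u ≠ φ v)
    (hmin : ∀ (W : Type) [Fintype W] (H : SimpleGraph W),
      Fintype.card W < Fintype.card V →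
      H.maxDegree ≤ 4 →
      (∀ s : Finset W, s.Nonempty →
        2 * ((s ×ˢ s).filter fun p => H.Adj p.1 p.2).card < 5 * s.card) →
      10 ≤ H.egirth →
      ∀ L : W → Finset ℕ, (∀ v, 6 ≤ (L v).card) →
        ∃ φ : W → ℕ, (∀ v, φ v ∈ L v) ∧
          ∀ u v, u ≠ v → (H.Adj u v ∨ ∃ w, H.Adj u w ∧ H.Adj w v) → φ u ≠ φ v) :
    ∀ u v w : V, G.Adj u v → G.Adj v w → u ≠ w →
      ¬(G.degree u = 2 ∧ G.degree v = 2 ∧ G.degree w = 2) := by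
  rintro u v w huv hvw huw ⟨hdu, hdv, hdw⟩
  obtain ⟨L, hLcard, hnoc⟩ := hbad
  have huv' : u ≠ v := G.ne_of_adj huv
  have hvw' : v ≠ w := G.ne_of_adj hvw
  -- the neighborhood of v is exactly {u, w}
  have hNv : G.neighborFinset v = {u, w} := by
    refine (Finset.eq_of_subset_of_card_le ?_ ?_).symm
    · intro x hx
      simp only [Finset.mem_insert, Finset.mem_singleton] at hx
      rcases hx with rfl | rfl
      · exact (G.mem_neighborFinset _ _).mpr huv.symm
      · exact (G.mem_neighborFinset _ _).mpr hvw
    · rw [Finset.card_pair huw, G.card_neighborFinset_eq_degree, hdv]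
  -- the neighborhood of u is {v, a} for some a ≠ v
  have hNu' : ∃ a, a ≠ v ∧ G.neighborFinset u = {v, a} := by
    have hc2 : (G.neighborFinset u).card = 2 := by
      rw [G.card_neighborFinset_eq_degree]; exact hdu
    obtain ⟨x, y, hxy, hN⟩ := Finset.card_eq_two.mp hc2
    have hv : v ∈ G.neighborFinset u := (G.mem_neighborFinset _ _).mpr huv
    rw [hN] at hv
    simp only [Finset.mem_insert, Finset.mem_singleton] at hv
    rcases hv with rfl | rfl
    · exact ⟨y, Ne.symm hxy, hN⟩
    · rw [Finset.pair_comm] at hN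
      exact ⟨x, hxy, hN⟩
  obtain ⟨a, hav, hNu⟩ := hNu'
  -- the neighborhood of w is {v, b} for some b ≠ v
  have hNw' : ∃ b, b ≠ v ∧ G.neighborFinset w = {v, b} := by
    have hc2 : (G.neighborFinset w).card = 2 := by
      rw [G.card_neighborFinset_eq_degree]; exact hdw
    obtain ⟨x, y, hxy, hN⟩ := Finset.card_eq_two.mp hc2
    have hv : v ∈ G.neighborFinset w := (G.mem_neighborFinset _ _).mpr hvw.symm
    rw [hN] at hv
    simp only [Finset.mem_insert, Finset.mem_singleton] at hv
    rcases hv with rfl | rfl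
    · exact ⟨y, Ne.symm hxy, hN⟩
    · rw [Finset.pair_comm] at hN
      exact ⟨x, hxy, hN⟩
  obtain ⟨b, hbv, hNw⟩ := hNw'
  have hadj_ua : G.Adj u a := by
    have : a ∈ G.neighborFinset u := by rw [hNu]; simp
    exact (G.mem_neighborFinset _ _).mp this
  have hadj_wb : G.Adj w b := by
    have : b ∈ G.neighborFinset w := by rw [hNw]; simp
    exact (G.mem_neighborFinset _ _).mp this
  -- the vertex set after deleting u, v, w
  set S : Set V := {x | x ≠ u ∧ x ≠ v ∧ x ≠ w} with hSdef
  have hcardW : Fintype.card S < Fintype.card V := by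
    refine Fintype.card_lt_of_injective_of_notMem Subtype.val Subtype.val_injective (b := u) ?_
    rintro ⟨⟨x, hx1, hx2, hx3⟩, h⟩
    exact hx1 h
  have hmaxH : (G.induce S).maxDegree ≤ 4 := by
    refine SimpleGraph.maxDegree_le_of_forall_degree_le _ _ fun x => ?_
    have h1 : (G.induce S).degree x ≤ G.degree x.val := by
      rw [← SimpleGraph.card_neighborFinset_eq_degree,
        ← SimpleGraph.card_neighborFinset_eq_degree]
      refine Finset.card_le_card_of_injOn Subtype.val ?_ Subtype.val_injective.injOn
      intro y hy
      rw [Finset.mem_coe, SimpleGraph.mem_neighborFinset] at hy ⊢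
      exact hy
    calc (G.induce S).degree x ≤ G.degree x.val := h1
      _ ≤ G.maxDegree := G.degree_le_maxDegree _
      _ = 4 := hΔ
  have hmadH : ∀ s : Finset S, s.Nonempty →
      2 * ((s ×ˢ s).filter fun p => (G.induce S).Adj p.1 p.2).card < 5 * s.card := by
    intro s hs
    have hsub : ((s ×ˢ s).filter fun p => (G.induce S).Adj p.1 p.2).card ≤
        (((s.image Subtype.val) ×ˢ (s.image Subtype.val)).filter
          fun p => G.Adj p.1 p.2).card := by
      refine Finset.card_le_card_of_injOn (fun p => (p.1.val, p.2.val)) ?_ ?_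
      · intro p hp
        simp only [Finset.mem_coe, Finset.mem_filter, Finset.mem_product, Finset.mem_image] at hp ⊢
        exact ⟨⟨⟨p.1, hp.1.1, rfl⟩, ⟨p.2, hp.1.2, rfl⟩⟩, hp.2⟩
      · intro p _ q _ h
        have h1 := congrArg Prod.fst h
        have h2 := congrArg Prod.snd h
        exact Prod.ext (Subtype.val_injective h1) (Subtype.val_injective h2)
    have hG := hmad (s.image Subtype.val) (hs.image _)
    rw [Finset.card_image_of_injective _ Subtype.val_injective] at hG
    omega
  have hgirthH : 10 ≤ (G.induce S).egirth := by
    rw [SimpleGraph.le_egirth]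
    intro c p hp
    have hc : (p.map (SimpleGraph.Embedding.induce (G := G) S).toHom).IsCycle :=
      hp.map (SimpleGraph.Embedding.induce (G := G) S).injective
    have h10 := SimpleGraph.le_egirth.mp hgirth _ _ hc
    rwa [SimpleGraph.Walk.length_map] at h10
  obtain ⟨φ, hφL, hφ⟩ := hmin S (G.induce S) hcardW hmaxH hmadH hgirthH
    (fun x => L x.val) (fun x => hLcard _)
  -- the partial coloring transported to V
  set T : V → ℕ := fun x => if h : x ∈ S then φ ⟨x, h⟩ else 0 with hT
  have hTS : ∀ (z : V) (hz : z ∈ S), T z = φ ⟨z, hz⟩ := by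
    intro z hz
    simp only [hT]
    exact dif_pos hz
  -- colored second neighborhoods of u, v, w
  set Su : Finset V := Finset.univ.filter
    (fun x => x ∈ S ∧ (G.Adj u x ∨ ∃ m, G.Adj u m ∧ G.Adj m x)) with hSu
  set Sv : Finset V := Finset.univ.filter
    (fun x => x ∈ S ∧ (G.Adj v x ∨ ∃ m, G.Adj v m ∧ G.Adj m x)) with hSv
  set Sw : Finset V := Finset.univ.filter
    (fun x => x ∈ S ∧ (G.Adj w x ∨ ∃ m, G.Adj w m ∧ G.Adj m x)) with hSw
  have hdeg4 : ∀ z : V, (G.neighborFinset z).card ≤ 4 := by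
    intro z
    rw [G.card_neighborFinset_eq_degree, ← hΔ]
    exact G.degree_le_maxDegree z
  have hSu_card : Su.card ≤ 4 := by
    have hsub : Su ⊆ insert a (G.neighborFinset a \ {u}) := by
      intro x hx
      simp only [hSu, Finset.mem_filter, Finset.mem_univ, true_and] at hx
      obtain ⟨⟨hx1, hx2, hx3⟩, hx4⟩ := hx
      rcases hx4 with h | ⟨m, h1, h2⟩
      · have hm : x ∈ G.neighborFinset u := (G.mem_neighborFinset _ _).mpr h
        rw [hNu] at hm
        simp only [Finset.mem_insert, Finset.mem_singleton] at hm
        rcases hm with rfl | rfl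
        · exact absurd rfl hx2
        · exact Finset.mem_insert_self _ _
      · have hm : m ∈ G.neighborFinset u := (G.mem_neighborFinset _ _).mpr h1
        rw [hNu] at hm
        simp only [Finset.mem_insert, Finset.mem_singleton] at hm
        rcases hm with h | h
        · rw [h] at h2
          have hm2 : x ∈ G.neighborFinset v := (G.mem_neighborFinset _ _).mpr h2
          rw [hNv] at hm2
          simp only [Finset.mem_insert, Finset.mem_singleton] at hm2
          rcases hm2 with rfl | rfl
          · exact absurd rfl hx1
          · exact absurd rfl hx3
        · rw [h] at h2
          refine Finset.mem_insert_of_mem (Finset.mem_sdiff.mpr ⟨?_, ?_⟩)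
          · exact (G.mem_neighborFinset _ _).mpr h2
          · simp [hx1]
    have hkey : (G.neighborFinset a \ {u}).card ≤ 3 := by
      have hua : u ∈ G.neighborFinset a := (G.mem_neighborFinset _ _).mpr hadj_ua.symm
      rw [Finset.card_sdiff_of_subset (by simpa using hua), Finset.card_singleton]
      have := hdeg4 a
      omega
    have := Finset.card_le_card hsub
    have := Finset.card_insert_le a (G.neighborFinset a \ {u})
    omega
  have hSw_card : Sw.card ≤ 4 := by
    have hsub : Sw ⊆ insert b (G.neighborFinset b \ {w}) := by
      intro x hx
      simp only [hSw, Finset.mem_filter, Finset.mem_univ, true_and] at hx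
      obtain ⟨⟨hx1, hx2, hx3⟩, hx4⟩ := hx
      rcases hx4 with h | ⟨m, h1, h2⟩
      · have hm : x ∈ G.neighborFinset w := (G.mem_neighborFinset _ _).mpr h
        rw [hNw] at hm
        simp only [Finset.mem_insert, Finset.mem_singleton] at hm
        rcases hm with rfl | rfl
        · exact absurd rfl hx2
        · exact Finset.mem_insert_self _ _
      · have hm : m ∈ G.neighborFinset w := (G.mem_neighborFinset _ _).mpr h1
        rw [hNw] at hm
        simp only [Finset.mem_insert, Finset.mem_singleton] at hm
        rcases hm with h | h
        · rw [h] at h2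
          have hm2 : x ∈ G.neighborFinset v := (G.mem_neighborFinset _ _).mpr h2
          rw [hNv] at hm2
          simp only [Finset.mem_insert, Finset.mem_singleton] at hm2
          rcases hm2 with rfl | rfl
          · exact absurd rfl hx1
          · exact absurd rfl hx3
        · rw [h] at h2
          refine Finset.mem_insert_of_mem (Finset.mem_sdiff.mpr ⟨?_, ?_⟩)
          · exact (G.mem_neighborFinset _ _).mpr h2
          · simp [hx3]
    have hkey : (G.neighborFinset b \ {w}).card ≤ 3 := by
      have hwb : w ∈ G.neighborFinset b := (G.mem_neighborFinset _ _).mpr hadj_wb.symm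
      rw [Finset.card_sdiff_of_subset (by simpa using hwb), Finset.card_singleton]
      have := hdeg4 b
      omega
    have := Finset.card_le_card hsub
    have := Finset.card_insert_le b (G.neighborFinset b \ {w})
    omega
  have hSv_card : Sv.card ≤ 2 := by
    have hsub : Sv ⊆ (G.neighborFinset u \ {v}) ∪ (G.neighborFinset w \ {v}) := by
      intro x hx
      simp only [hSv, Finset.mem_filter, Finset.mem_univ, true_and] at hx
      obtain ⟨⟨hx1, hx2, hx3⟩, hx4⟩ := hx
      rcases hx4 with h | ⟨m, h1, h2⟩
      · have hm : x ∈ G.neighborFinset v := (G.mem_neighborFinset _ _).mpr h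
        rw [hNv] at hm
        simp only [Finset.mem_insert, Finset.mem_singleton] at hm
        rcases hm with rfl | rfl
        · exact absurd rfl hx1
        · exact absurd rfl hx3
      · have hm : m ∈ G.neighborFinset v := (G.mem_neighborFinset _ _).mpr h1
        rw [hNv] at hm
        simp only [Finset.mem_insert, Finset.mem_singleton] at hm
        rcases hm with h | h
        · rw [h] at h2
          refine Finset.mem_union_left _ (Finset.mem_sdiff.mpr ⟨?_, ?_⟩)
          · exact (G.mem_neighborFinset _ _).mpr h2
          · simp [hx2]
        · rw [h] at h2
          refine Finset.mem_union_right _ (Finset.mem_sdiff.mpr ⟨?_, ?_⟩)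
          · exact (G.mem_neighborFinset _ _).mpr h2
          · simp [hx2]
    have h1 : (G.neighborFinset u \ {v}).card ≤ 1 := by
      have hvu : v ∈ G.neighborFinset u := (G.mem_neighborFinset _ _).mpr huv
      rw [Finset.card_sdiff_of_subset (by simpa using hvu), Finset.card_singleton,
        G.card_neighborFinset_eq_degree, hdu]
    have h2 : (G.neighborFinset w \ {v}).card ≤ 1 := by
      have hvw2 : v ∈ G.neighborFinset w := (G.mem_neighborFinset _ _).mpr hvw.symm
      rw [Finset.card_sdiff_of_subset (by simpa using hvw2), Finset.card_singleton,
        G.card_neighborFinset_eq_degree, hdw]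
    have := Finset.card_le_card hsub
    have := Finset.card_union_le (G.neighborFinset u \ {v}) (G.neighborFinset w \ {v})
    omega
  -- choose the three new colors
  have hselect : ∀ (c : V) (F : Finset ℕ), F.card ≤ 5 → (L c \ F).Nonempty := by
    intro c F hF
    rw [← Finset.card_pos]
    have h1 := Finset.le_card_sdiff F (L c)
    have h2 := hLcard c
    omega
  obtain ⟨cu, hcu⟩ := hselect u (Su.image T)
    (le_trans Finset.card_image_le (by omega))
  rw [Finset.mem_sdiff] at hcu
  obtain ⟨cw, hcw⟩ := hselect w (insert cu (Sw.image T))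
    (le_trans (Finset.card_insert_le _ _)
      (by have := Finset.card_image_le (s := Sw) (f := T); omega))
  rw [Finset.mem_sdiff] at hcw
  obtain ⟨cv, hcv⟩ := hselect v (insert cu (insert cw (Sv.image T)))
    (by
      have h1 := Finset.card_image_le (s := Sv) (f := T)
      have h2 := Finset.card_insert_le cw (Sv.image T)
      have h3 := Finset.card_insert_le cu (insert cw (Sv.image T))
      omega)
  rw [Finset.mem_sdiff] at hcv
  have hcw_cu : cw ≠ cu := fun h => hcw.2 (by simp [h])
  have hcw_img : cw ∉ Sw.image T := fun h => hcw.2 (Finset.mem_insert_of_mem h)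
  have hcv_cu : cv ≠ cu := fun h => hcv.2 (by simp [h])
  have hcv_cw : cv ≠ cw := fun h => hcv.2 (by simp [h])
  have hcv_img : cv ∉ Sv.image T := fun h =>
    hcv.2 (Finset.mem_insert_of_mem (Finset.mem_insert_of_mem h))
  -- membership helpers
  have hmemSu : ∀ z : V, z ∈ S → (G.Adj u z ∨ ∃ m, G.Adj u m ∧ G.Adj m z) →
      T z ∈ Su.image T := fun z hz hn =>
    Finset.mem_image_of_mem T (Finset.mem_filter.mpr ⟨Finset.mem_univ _, hz, hn⟩)
  have hmemSv : ∀ z : V, z ∈ S → (G.Adj v z ∨ ∃ m, G.Adj v m ∧ G.Adj m z) →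
      T z ∈ Sv.image T := fun z hz hn =>
    Finset.mem_image_of_mem T (Finset.mem_filter.mpr ⟨Finset.mem_univ _, hz, hn⟩)
  have hmemSw : ∀ z : V, z ∈ S → (G.Adj w z ∨ ∃ m, G.Adj w m ∧ G.Adj m z) →
      T z ∈ Sw.image T := fun z hz hn =>
    Finset.mem_image_of_mem T (Finset.mem_filter.mpr ⟨Finset.mem_univ _, hz, hn⟩)
  have hKu : ∀ z, z ∈ S → (G.Adj u z ∨ ∃ m, G.Adj u m ∧ G.Adj m z) → cu ≠ T z :=
    fun z hz hn heq => hcu.2 (heq ▸ hmemSu z hz hn)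
  have hKv : ∀ z, z ∈ S → (G.Adj v z ∨ ∃ m, G.Adj v m ∧ G.Adj m z) → cv ≠ T z :=
    fun z hz hn heq => hcv_img (heq ▸ hmemSv z hz hn)
  have hKw : ∀ z, z ∈ S → (G.Adj w z ∨ ∃ m, G.Adj w m ∧ G.Adj m z) → cw ≠ T z :=
    fun z hz hn heq => hcw_img (heq ▸ hmemSw z hz hn)
  have hsymm2 : ∀ x y : V, (G.Adj x y ∨ ∃ m, G.Adj x m ∧ G.Adj m y) →
      (G.Adj y x ∨ ∃ m, G.Adj y m ∧ G.Adj m x) := by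
    rintro x y (h | ⟨m, h1, h2⟩)
    · exact Or.inl h.symm
    · exact Or.inr ⟨m, h2.symm, h1.symm⟩
  -- build the full coloring and contradict hnoc
  refine hnoc ⟨fun x => if x = u then cu else if x = v then cv else
    if x = w then cw else T x, ?_, ?_⟩
  · intro x
    beta_reduce
    by_cases h1 : x = u
    · subst h1; simpa using hcu.1
    by_cases h2 : x = v
    · subst h2; rw [if_neg h1, if_pos rfl]; exact hcv.1
    by_cases h3 : x = w
    · subst h3; rw [if_neg h1, if_neg h2, if_pos rfl]; exact hcw.1
    · rw [if_neg h1, if_neg h2, if_neg h3, hTS x ⟨h1, h2, h3⟩]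
      exact hφL ⟨x, h1, h2, h3⟩
  · intro x y hxy hnear
    beta_reduce
    have cx : x = u ∨ x = v ∨ x = w ∨ x ∈ S := by
      by_cases h1 : x = u
      · exact Or.inl h1
      by_cases h2 : x = v
      · exact Or.inr (Or.inl h2)
      by_cases h3 : x = w
      · exact Or.inr (Or.inr (Or.inl h3))
      · exact Or.inr (Or.inr (Or.inr ⟨h1, h2, h3⟩))
    have cy : y = u ∨ y = v ∨ y = w ∨ y ∈ S := by
      by_cases h1 : y = u
      · exact Or.inl h1
      by_cases h2 : y = v
      · exact Or.inr (Or.inl h2)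
      by_cases h3 : y = w
      · exact Or.inr (Or.inr (Or.inl h3))
      · exact Or.inr (Or.inr (Or.inr ⟨h1, h2, h3⟩))
    rcases cx with rfl | rfl | rfl | hx
    · rcases cy with rfl | rfl | rfl | hy
      · exact absurd rfl hxy
      · rw [if_pos rfl, if_neg (Ne.symm huv'), if_pos rfl]
        exact Ne.symm hcv_cu
      · rw [if_pos rfl, if_neg (Ne.symm huw), if_neg (Ne.symm hvw'), if_pos rfl]
        exact Ne.symm hcw_cu
      · obtain ⟨hy1, hy2, hy3⟩ := hy
        rw [if_pos rfl, if_neg hy1, if_neg hy2, if_neg hy3]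
        exact hKu y ⟨hy1, hy2, hy3⟩ hnear
    · rcases cy with rfl | rfl | rfl | hy
      · rw [if_neg (Ne.symm huv'), if_pos rfl, if_pos rfl]
        exact hcv_cu
      · exact absurd rfl hxy
      · rw [if_neg (Ne.symm huv'), if_pos rfl, if_neg (Ne.symm huw),
          if_neg (Ne.symm hvw'), if_pos rfl]
        exact hcv_cw
      · obtain ⟨hy1, hy2, hy3⟩ := hy
        rw [if_neg (Ne.symm huv'), if_pos rfl, if_neg hy1, if_neg hy2, if_neg hy3]
        exact hKv y ⟨hy1, hy2, hy3⟩ hnear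
    · rcases cy with rfl | rfl | rfl | hy
      · rw [if_neg (Ne.symm huw), if_neg (Ne.symm hvw'), if_pos rfl, if_pos rfl]
        exact hcw_cu
      · rw [if_neg (Ne.symm huw), if_neg (Ne.symm hvw'), if_pos rfl,
          if_neg (Ne.symm huv'), if_pos rfl]
        exact Ne.symm hcv_cw
      · exact absurd rfl hxy
      · obtain ⟨hy1, hy2, hy3⟩ := hy
        rw [if_neg (Ne.symm huw), if_neg (Ne.symm hvw'), if_pos rfl,
          if_neg hy1, if_neg hy2, if_neg hy3]
        exact hKw y ⟨hy1, hy2, hy3⟩ hnear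
    · obtain ⟨hx1, hx2, hx3⟩ := hx
      rcases cy with rfl | rfl | rfl | hy
      · rw [if_neg hx1, if_neg hx2, if_neg hx3, if_pos rfl]
        exact (hKu x ⟨hx1, hx2, hx3⟩ (hsymm2 x y hnear)).symm
      · rw [if_neg hx1, if_neg hx2, if_neg hx3, if_neg (Ne.symm huv'), if_pos rfl]
        exact (hKv x ⟨hx1, hx2, hx3⟩ (hsymm2 x y hnear)).symm
      · rw [if_neg hx1, if_neg hx2, if_neg hx3, if_neg (Ne.symm huw),
          if_neg (Ne.symm hvw'), if_pos rfl]
        exact (hKw x ⟨hx1, hx2, hx3⟩ (hsymm2 x y hnear)).symm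
      · obtain ⟨hy1, hy2, hy3⟩ := hy
        rw [if_neg hx1, if_neg hx2, if_neg hx3, if_neg hy1, if_neg hy2, if_neg hy3,
          hTS x ⟨hx1, hx2, hx3⟩, hTS y ⟨hy1, hy2, hy3⟩]
        refine hφ ⟨x, hx1, hx2, hx3⟩ ⟨y, hy1, hy2, hy3⟩
          (fun h => hxy (congrArg Subtype.val h)) ?_
        rcases hnear with h | ⟨m, h1, h2⟩
        · exact Or.inl h
        · by_cases hmu : m = u
          · rw [hmu] at h1 h2
            have hx' : x ∈ G.neighborFinset u := (G.mem_neighborFinset _ _).mpr h1.symm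
            have hy' : y ∈ G.neighborFinset u := (G.mem_neighborFinset _ _).mpr h2
            rw [hNu] at hx' hy'
            simp only [Finset.mem_insert, Finset.mem_singleton] at hx' hy'
            rcases hx' with rfl | rfl
            · exact absurd rfl hx2
            · rcases hy' with rfl | rfl
              · exact absurd rfl hy2
              · exact absurd rfl hxy
          by_cases hmv : m = v
          · rw [hmv] at h1
            have hx' : x ∈ G.neighborFinset v := (G.mem_neighborFinset _ _).mpr h1.symm
            rw [hNv] at hx'
            simp only [Finset.mem_insert, Finset.mem_singleton] at hx'
            rcases hx' with rfl | rfl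
            · exact absurd rfl hx1
            · exact absurd rfl hx3
          by_cases hmw : m = w
          · rw [hmw] at h1 h2
            have hx' : x ∈ G.neighborFinset w := (G.mem_neighborFinset _ _).mpr h1.symm
            have hy' : y ∈ G.neighborFinset w := (G.mem_neighborFinset _ _).mpr h2
            rw [hNw] at hx' hy'
            simp only [Finset.mem_insert, Finset.mem_singleton] at hx' hy'
            rcases hx' with rfl | rfl
            · exact absurd rfl hx2
            · rcases hy' with rfl | rfl
              · exact absurd rfl hy2
              · exact absurd rfl hxy
          · exact Or.inr ⟨⟨m, hmu, hmv, hmw⟩, h1, h2⟩
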